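/- Let T be a linear operator on a finite-dimensional complex vector space whose spectral radius is at most 1, and suppose every eigenvalue λ of T with |λ| = 1 is semisimple (its algebraic multiplicity equals its geometric multiplicity). Then the Cesàro means (1/n) ∑_{k=0}^{n-1} T^k converge as n → ∞ to the projection E₁ onto the eigenspace ker(T − I) along the sum of the other generalized eigenspaces. -/

import Mathlib

open Filter Finset

lemma hlp {V : Type*} [NormedAddCommGroup V] [NormedSpace ℂ V]
    (T : V →ₗ[ℂ] V) (μ : ℂ) (hμ : ‖μ‖ < 1) (v : V)
    (hv : v ∈ Module.End.maxGenEigenspace T μ) :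
    Tendsto (fun k : ℕ => (T ^ k) v) atTop (nhds 0) := by
  obtain ⟨m, hm⟩ := (Module.End.mem_maxGenEigenspace T μ v).mp hv
  set N : Module.End ℂ V := T - μ • 1 with hN
  have hcomm : Commute N (μ • (1 : Module.End ℂ V)) := (Commute.one_right N).smul_right μ
  have hNj : ∀ j, m ≤ j → (N ^ j) v = 0 := by
    intro j hj
    have h1 : N ^ j = N ^ (j - m) * N ^ m := by rw [← pow_add]; congr 1; omega
    rw [h1, Module.End.mul_apply, hm, map_zero]
  have key : ∀ k : ℕ, (T ^ k) v
      = ∑ j ∈ range m, ((k.choose j : ℂ) * μ ^ (k - j)) • (N ^ j) v := by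
    intro k
    have hT : T = N + μ • 1 := by rw [hN]; abel
    have expand : (T ^ k) v
        = ∑ j ∈ range (k + 1), ((k.choose j : ℂ) * μ ^ (k - j)) • (N ^ j) v := by
      conv_lhs => rw [hT, hcomm.add_pow]
      rw [LinearMap.sum_apply]
      refine Finset.sum_congr rfl fun j hj => ?_
      rw [show (μ • (1 : Module.End ℂ V)) ^ (k - j) = μ ^ (k - j) • 1 by rw [smul_pow, one_pow]]
      simp only [Module.End.mul_apply, Module.End.natCast_apply, LinearMap.smul_apply,
        Module.End.one_apply, map_nsmul, map_smul]
      rw [mul_smul, Nat.cast_smul_eq_nsmul ℂ]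
    rw [expand]
    rcases le_total m (k + 1) with h | h
    · refine (Finset.sum_subset (Finset.range_subset_range.mpr h) fun j hj hj' => ?_).symm
      rw [hNj j (by simpa using hj'), smul_zero]
    · refine Finset.sum_subset (Finset.range_subset_range.mpr h) fun j hj hj' => ?_
      have : k < j := by simpa using hj'
      rw [Nat.choose_eq_zero_of_lt this]
      simp
  have hterm : ∀ j : ℕ, Tendsto
      (fun k : ℕ => ((k.choose j : ℂ) * μ ^ (k - j)) • (N ^ j) v) atTop (nhds 0) := by
    intro j
    set r : ℝ := max ‖μ‖ (1/2) with hr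
    have hr1 : r < 1 := by rw [hr]; exact max_lt hμ (by norm_num)
    have hr0 : 0 < r := lt_of_lt_of_le (by norm_num) (le_max_right _ _)
    have hμr : ‖μ‖ ≤ r := le_max_left _ _
    have hg : Tendsto (fun k : ℕ => ((k : ℝ) ^ j * r ^ k) * (‖(N ^ j) v‖ / r ^ j))
        atTop (nhds 0) := by
      have := (summable_norm_pow_mul_geometric_of_norm_lt_one j
          (r := r) (by rwa [Real.norm_eq_abs, abs_of_pos hr0])).of_norm.tendsto_atTop_zero
      simpa using this.mul_const _
    have hbound : ∀ᶠ k : ℕ in atTop,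
        ‖((k.choose j : ℂ) * μ ^ (k - j)) • (N ^ j) v‖
          ≤ ((k : ℝ) ^ j * r ^ k) * (‖(N ^ j) v‖ / r ^ j) := by
      filter_upwards [Filter.eventually_ge_atTop j] with k hk
      rw [norm_smul, norm_mul, norm_pow, Complex.norm_natCast]
      have h1 : (k.choose j : ℝ) ≤ (k : ℝ) ^ j := by
        exact_mod_cast Nat.choose_le_pow k j
      have h2 : ‖μ‖ ^ (k - j) ≤ r ^ (k - j) := pow_le_pow_left₀ (norm_nonneg _) hμr _
      have h3 : r ^ (k - j) = r ^ k / r ^ j := by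
        rw [eq_div_iff (by positivity), ← pow_add]; congr 1; omega
      calc (k.choose j : ℝ) * ‖μ‖ ^ (k - j) * ‖(N ^ j) v‖
          ≤ (k : ℝ) ^ j * (r ^ k / r ^ j) * ‖(N ^ j) v‖ := by
            apply mul_le_mul_of_nonneg_right _ (norm_nonneg _)
            rw [← h3]
            exact mul_le_mul h1 h2 (by positivity) (by positivity)
        _ = ((k : ℝ) ^ j * r ^ k) * (‖(N ^ j) v‖ / r ^ j) := by ring
    exact squeeze_zero_norm' hbound hg
  have hsum : Tendsto (fun k : ℕ =>
      ∑ j ∈ range m, ((k.choose j : ℂ) * μ ^ (k - j)) • (N ^ j) v) atTop (nhds 0) := by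
    have := tendsto_finset_sum (range m) (fun j _ => hterm j)
    simpa using this
  exact hsum.congr fun k => (key k).symm

/-- Mean ergodic theorem: if all eigenvalues of `T` lie in the closed unit disk
and the peripheral ones are semisimple, the Cesàro means of the powers of `T`
converge to the spectral projection onto `ker (T - 1)` along the other
generalized eigenspaces. -/
theorem stmt_4 {V : Type*} [NormedAddCommGroup V] [NormedSpace ℂ V]
    [FiniteDimensional ℂ V] (T : V →ₗ[ℂ] V)
    (hdisk : ∀ μ : ℂ, Module.End.HasEigenvalue T μ → ‖μ‖ ≤ 1)
    (hss : ∀ μ : ℂ, ‖μ‖ = 1 →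
      Module.End.maxGenEigenspace T μ = Module.End.eigenspace T μ)
    (E : V →ₗ[ℂ] V)
    (hE1 : ∀ v ∈ Module.End.eigenspace T 1, E v = v)
    (hE0 : ∀ μ : ℂ, μ ≠ 1 → ∀ v ∈ Module.End.maxGenEigenspace T μ, E v = 0) :
    ∀ v : V, Tendsto (fun n : ℕ => (n : ℂ)⁻¹ • ∑ k ∈ range n, (T ^ k) v)
      atTop (nhds (E v)) := by
  intro v
  have hv : v ∈ ⨆ μ : ℂ, Module.End.maxGenEigenspace T μ := by
    rw [Module.End.iSup_maxGenEigenspace_eq_top]; trivial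
  refine Submodule.iSup_induction (x := v)
    (motive := fun x => Tendsto (fun n : ℕ => (n : ℂ)⁻¹ • ∑ k ∈ range n, (T ^ k) x)
      atTop (nhds (E x))) _ hv ?_ ?_ ?_
  · intro μ w hw
    by_cases hw0 : w = 0
    · simp [hw0]
    -- w ≠ 0, so μ is an eigenvalue
    have hev : Module.End.HasEigenvalue T μ := by
      obtain ⟨k, hk⟩ := (Module.End.mem_maxGenEigenspace T μ w).mp hw
      have hk0 : k ≠ 0 := by rintro rfl; simp at hk; exact hw0 hk
      refine Module.End.hasEigenvalue_of_hasGenEigenvalue (k := k) ?_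
      rw [Module.End.hasGenEigenvalue_iff]
      intro hbot
      apply hw0
      have : w ∈ Module.End.genEigenspace T μ k := Module.End.mem_genEigenspace_nat.mpr hk
      rw [hbot] at this
      simpa using this
    have hμ1 : ‖μ‖ ≤ 1 := hdisk μ hev
    rcases lt_or_eq_of_le hμ1 with hlt | heq
    · -- interior: Cesàro of a null sequence
      have hμne : μ ≠ 1 := by rintro rfl; simp at hlt
      rw [hE0 μ hμne w hw]
      have h0 := hlp T μ hlt w hw
      have := h0.cesaro_smul
      refine this.congr fun n => ?_
      rw [show ((n : ℝ)⁻¹ : ℝ) • ∑ k ∈ range n, (T ^ k) w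
          = (n : ℂ)⁻¹ • ∑ k ∈ range n, (T ^ k) w by
        rw [← Complex.coe_smul]; push_cast; ring_nf]
    · -- peripheral: eigenvector
      have hw' : w ∈ Module.End.eigenspace T μ := by rw [← hss μ heq]; exact hw
      have heig : T w = μ • w := Module.End.mem_eigenspace_iff.mp hw'
      have hpow : ∀ k : ℕ, (T ^ k) w = μ ^ k • w := by
        intro k; induction k with
        | zero => simp
        | succ k ih => rw [pow_succ, Module.End.mul_apply, heig, map_smul, ih,
            smul_smul, mul_comm μ (μ ^ k), ← pow_succ]
      by_cases hμ : μ = 1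
      · subst hμ
        rw [hE1 w hw']
        have : ∀ᶠ n : ℕ in atTop, (n : ℂ)⁻¹ • ∑ k ∈ range n, (T ^ k) w = w := by
          filter_upwards [Filter.eventually_ge_atTop 1] with n hn
          simp only [hpow, one_pow, one_smul, Finset.sum_const, Finset.card_range]
          have hne : (n : ℂ) ≠ 0 := Nat.cast_ne_zero.mpr (by omega)
          rw [← Nat.cast_smul_eq_nsmul ℂ, smul_smul, inv_mul_cancel₀ hne, one_smul]
        exact Tendsto.congr' (this.mono fun n h => h.symm) tendsto_const_nhds
      · rw [hE0 μ hμ w hw]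
        have hform : ∀ n : ℕ, (n : ℂ)⁻¹ • ∑ k ∈ range n, (T ^ k) w
            = ((n : ℂ)⁻¹ * ((μ ^ n - 1) / (μ - 1))) • w := by
          intro n
          simp only [hpow, ← Finset.sum_smul, geom_sum_eq hμ, smul_smul]
        simp only [hform]
        rw [show (0 : V) = (0 : ℂ) • w by simp]
        refine Tendsto.smul_const ?_ w
        have hb : ∀ᶠ n : ℕ in atTop, ‖(n : ℂ)⁻¹ * ((μ ^ n - 1) / (μ - 1))‖
            ≤ (2 / ‖μ - 1‖) * (n : ℝ)⁻¹ := by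
          filter_upwards [Filter.eventually_ge_atTop 1] with n hn
          rw [norm_mul, norm_div, norm_inv, Complex.norm_natCast]
          have : ‖μ ^ n - 1‖ ≤ 2 := by
            calc ‖μ ^ n - 1‖ ≤ ‖μ ^ n‖ + ‖(1 : ℂ)‖ := norm_sub_le _ _
              _ = ‖μ‖ ^ n + 1 := by rw [norm_pow, norm_one]
              _ ≤ 2 := by rw [heq, one_pow]; norm_num
          calc (n : ℝ)⁻¹ * (‖μ ^ n - 1‖ / ‖μ - 1‖)
              ≤ (n : ℝ)⁻¹ * (2 / ‖μ - 1‖) := by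
                gcongr

            _ = (2 / ‖μ - 1‖) * (n : ℝ)⁻¹ := by ring
        refine squeeze_zero_norm' hb ?_
        simpa using (tendsto_inv_atTop_nhds_zero_nat.const_mul (2 / ‖μ - 1‖))
  · simp
  · intro x y hx hy
    have := hx.add hy
    simp only [map_add, Finset.sum_add_distrib, smul_add] at this ⊢
    exact this
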